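/- Null geodesics with constant θ: the conditions Θ(θ) = 0 and dΘ/dθ(θ) = 0 (for θ ∈ (0,π), θ ≠ π/2, E ≠ 0) are satisfied if and only if L_z = ±aE sin²θ and Q = −a²E² cos⁴θ; in that case K = Q + (aE − L_z)² equals 0 when L_z = aE sin²θ. -/

import Mathlib

/-- Null geodesics at constant θ: for `θ ∈ (0,π)`, `θ ≠ π/2`, `E ≠ 0`,
the conditions `Θ(θ) = 0` and `(dΘ/dθ)(θ) = 0` hold if and only if
`L_z = ± aE sin²θ` and `Q = −a²E² cos⁴θ`; moreover with the plus sign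
`K = Q + (aE − L_z)² = 0`. -/
theorem constant_theta_geodesics (a M E : ℝ) (ha : 0 < a) (hM : 0 < M)
    (hE : E ≠ 0) (θ : ℝ) (hθ : θ ∈ Set.Ioo 0 Real.pi) (hθ2 : θ ≠ Real.pi / 2)
    (Lz Q : ℝ)
    (Θ : ℝ → ℝ)
    (hΘ : ∀ x, Θ x = Q - (Lz ^ 2 / Real.sin x ^ 2 - E ^ 2 * a ^ 2) * Real.cos x ^ 2) :
    (Θ θ = 0 ∧ deriv Θ θ = 0 ↔
      (Lz = a * E * Real.sin θ ^ 2 ∨ Lz = -(a * E * Real.sin θ ^ 2)) ∧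
        Q = -(a ^ 2 * E ^ 2 * Real.cos θ ^ 4)) ∧
    (Θ θ = 0 ∧ deriv Θ θ = 0 → Lz = a * E * Real.sin θ ^ 2 →
      Q + (a * E - Lz) ^ 2 = 0) := by
  obtain ⟨hθ0, hθπ⟩ := hθ
  have hs : Real.sin θ ≠ 0 := ne_of_gt (Real.sin_pos_of_pos_of_lt_pi hθ0 hθπ)
  have hc : Real.cos θ ≠ 0 := by
    intro h
    obtain ⟨k, hk⟩ := Real.cos_eq_zero_iff.mp h
    have hπ := Real.pi_pos
    have hk0 : k = 0 := by
      rcases lt_trichotomy k 0 with h1 | h1 | h1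
      · have hk1 : k ≤ -1 := by omega
        have : (k : ℝ) ≤ -1 := by exact_mod_cast hk1
        nlinarith
      · exact h1
      · have : (1 : ℝ) ≤ (k : ℝ) := by exact_mod_cast h1
        nlinarith
    subst hk0
    simp at hk
    exact hθ2 (by linarith [hk])
  have hsc : Real.sin θ ^ 2 = 1 - Real.cos θ ^ 2 := Real.sin_sq θ
  have hs2 : Real.sin θ ^ 2 ≠ 0 := pow_ne_zero 2 hs
  have hs3 : Real.sin θ ^ 3 ≠ 0 := pow_ne_zero 3 hs
  -- derivative computation
  have hder : deriv Θ θ = 2 * Lz ^ 2 * Real.cos θ / Real.sin θ ^ 3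
      - 2 * E ^ 2 * a ^ 2 * Real.cos θ * Real.sin θ := by
    have hΘfun : Θ = fun x => Q - (Lz ^ 2 / Real.sin x ^ 2 - E ^ 2 * a ^ 2) * Real.cos x ^ 2 :=
      funext hΘ
    have hsin : HasDerivAt (fun x => Real.sin x ^ 2)
        (2 * Real.sin θ ^ 1 * Real.cos θ) θ := by
      simpa using (Real.hasDerivAt_sin θ).fun_pow 2
    have hcos : HasDerivAt (fun x => Real.cos x ^ 2)
        (2 * Real.cos θ ^ 1 * (-Real.sin θ)) θ := by
      simpa using (Real.hasDerivAt_cos θ).fun_pow 2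
    have hdiv : HasDerivAt (fun x => Lz ^ 2 / Real.sin x ^ 2)
        ((0 * Real.sin θ ^ 2 - Lz ^ 2 * (2 * Real.sin θ ^ 1 * Real.cos θ))
          / (Real.sin θ ^ 2) ^ 2) θ :=
      (hasDerivAt_const θ (Lz ^ 2)).div hsin hs2
    have hsub : HasDerivAt (fun x => Lz ^ 2 / Real.sin x ^ 2 - E ^ 2 * a ^ 2)
        ((0 * Real.sin θ ^ 2 - Lz ^ 2 * (2 * Real.sin θ ^ 1 * Real.cos θ))
          / (Real.sin θ ^ 2) ^ 2) θ := by
      simpa using hdiv.sub_const (E ^ 2 * a ^ 2)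
    have hmul := hsub.fun_mul hcos
    have hfinal := (hasDerivAt_const θ Q).fun_sub hmul
    rw [hΘfun, hfinal.deriv]
    field_simp
    linear_combination (2 * Lz ^ 2 * Real.cos θ) * hsc
  have hΘθ : Θ θ = Q - (Lz ^ 2 / Real.sin θ ^ 2 - E ^ 2 * a ^ 2) * Real.cos θ ^ 2 := hΘ θ
  constructor
  · constructor
    · rintro ⟨h0, h1⟩
      rw [hΘθ] at h0
      rw [hder] at h1
      have h1' : 2 * Lz ^ 2 * Real.cos θ
          = 2 * E ^ 2 * a ^ 2 * Real.cos θ * Real.sin θ * Real.sin θ ^ 3 := by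
        field_simp at h1
        linarith
      have hfac : Real.cos θ * (2 * Lz ^ 2 - 2 * E ^ 2 * a ^ 2 * Real.sin θ ^ 4) = 0 := by
        linear_combination h1'
      have hLz2 : Lz ^ 2 = a ^ 2 * E ^ 2 * Real.sin θ ^ 4 := by
        rcases mul_eq_zero.mp hfac with h | h
        · exact absurd h hc
        · nlinarith
      have hLz : Lz = a * E * Real.sin θ ^ 2 ∨ Lz = -(a * E * Real.sin θ ^ 2) := by
        have hz : (Lz - a * E * Real.sin θ ^ 2) * (Lz + a * E * Real.sin θ ^ 2) = 0 := by
          linear_combination hLz2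
        rcases mul_eq_zero.mp hz with h | h
        · left; linarith
        · right; linarith
      refine ⟨hLz, ?_⟩
      have hQ : Q = (Lz ^ 2 / Real.sin θ ^ 2 - E ^ 2 * a ^ 2) * Real.cos θ ^ 2 := by
        linarith
      rw [hQ, hLz2]
      field_simp
      linear_combination hsc
    · rintro ⟨hLz, hQ⟩
      have hLz2 : Lz ^ 2 = a ^ 2 * E ^ 2 * Real.sin θ ^ 4 := by
        rcases hLz with h | h <;> rw [h] <;> ring
      constructor
      · rw [hΘθ, hQ]
        field_simp [hLz2]
        linear_combination -(a ^ 2 * E ^ 2 * Real.cos θ ^ 2 * Real.sin θ ^ 2) * hsc - Real.cos θ ^ 2 * hLz2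
      · rw [hder, hLz2]
        field_simp
        ring
  · rintro ⟨h0, h1⟩ hLz
    rw [hΘθ, hLz] at h0
    rw [hLz]
    have h0' : Q * Real.sin θ ^ 2
        = ((a * E * Real.sin θ ^ 2) ^ 2 - Real.sin θ ^ 2 * (E ^ 2 * a ^ 2))
          * Real.cos θ ^ 2 := by
      field_simp at h0
      linear_combination (Real.sin θ ^ 2) * h0
    have hQval : Q = -(a ^ 2 * E ^ 2 * Real.cos θ ^ 4) := by
      have : Real.sin θ ^ 2 * (Q + a ^ 2 * E ^ 2 * Real.cos θ ^ 4) = 0 := by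
        linear_combination h0' + (a ^ 2 * E ^ 2 * Real.cos θ ^ 2 * Real.sin θ ^ 2) * hsc
      rcases mul_eq_zero.mp this with h | h
      · exact absurd h hs2
      · linarith
    rw [hQval]
    linear_combination (a ^ 2 * E ^ 2 * (Real.sin θ ^ 2 - 1 - Real.cos θ ^ 2)) * hsc
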